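/- Let n ≥ 1 and identify a 'cube' in the discrete torus (ℤ/4ℤ)^n with a translate v + {0,1}^n for v ∈ (ℤ/4ℤ)^n. Two cubes v + {0,1}^n and w + {0,1}^n are disjoint if and only if there exists a coordinate i such that v_i - w_i = 2 in ℤ/4ℤ. -/
import Mathlib


/-- The cube `v + {0,1}^n` in the discrete torus `(ℤ/4ℤ)^n`. -/
def cube {n : ℕ} (v : Fin n → ZMod 4) : Set (Fin n → ZMod 4) :=
  {x | ∀ i, x i = v i ∨ x i = v i + 1}

theorem cubes_disjoint_iff {n : ℕ} (hn : 1 ≤ n) (v w : Fin n → ZMod 4) :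
    Disjoint (cube v) (cube w) ↔ ∃ i, v i - w i = 2 := by
  constructor
  · intro h
    by_contra hc
    push_neg at hc
    refine Set.not_disjoint_iff.mpr ?_ h
    refine ⟨fun i => if v i = w i ∨ v i = w i + 1 then v i else w i, ?_, ?_⟩
    · intro i
      simp only
      split
      · left; rfl
      · rename_i hnot
        have hd := hc i
        right
        revert hd hnot
        generalize v i = a; generalize w i = b
        revert a b; decide
    · intro i
      simp only
      split
      · rename_i hvw
        have hd := hc i
        revert hd hvw
        generalize v i = a; generalize w i = b
        revert a b; decide
      · left; rfl
  · rintro ⟨i, hi⟩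
    rw [Set.disjoint_left]
    intro x hx hx'
    have h1 := hx i
    have h2 := hx' i
    revert hi h1 h2
    generalize v i = a; generalize w i = b; generalize x i = c
    revert a b c; decide
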